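/- Token identity changes an enclosure: for every token t, rationals lo ≤ hi, and dimension tag d, Encl (Sub (Meas t lo hi d) (Meas t lo hi d)) = {0}; and for distinct tokens t₁ ≠ t₂, the value hi - lo is an element of Encl (Sub (Meas t₁ lo hi d) (Meas t₂ lo hi d)), so when lo < hi this distinct-token enclosure is not equal to {0}. -/
import Mathlib


abbrev Token := ℕ

inductive Dim where
  | base
deriving DecidableEq

inductive Expr where
  | Exact (q : ℚ) (d : Dim)
  | Meas (t : Token) (lo hi : ℚ) (d : Dim)
  | Add (a b : Expr)
  | Sub (a b : Expr)
  | Mul (a b : Expr)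
  | Div (a b : Expr)
  | Neg (a : Expr)

abbrev TokenEnv := Token → ℚ

def TokenConsistent (σ : TokenEnv) : Expr → Prop
  | .Exact _ _ => True
  | .Meas t lo hi _ => lo ≤ σ t ∧ σ t ≤ hi
  | .Add a b => TokenConsistent σ a ∧ TokenConsistent σ b
  | .Sub a b => TokenConsistent σ a ∧ TokenConsistent σ b
  | .Mul a b => TokenConsistent σ a ∧ TokenConsistent σ b
  | .Div a b => TokenConsistent σ a ∧ TokenConsistent σ b
  | .Neg a => TokenConsistent σ a

def eval (σ : TokenEnv) : Expr → ℚ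
  | .Exact q _ => q
  | .Meas t _ _ _ => σ t
  | .Add a b => eval σ a + eval σ b
  | .Sub a b => eval σ a - eval σ b
  | .Mul a b => eval σ a * eval σ b
  | .Div a b => eval σ a / eval σ b
  | .Neg a => - eval σ a

def Encl (e : Expr) : Set ℚ := {v : ℚ | ∃ σ : TokenEnv, TokenConsistent σ e ∧ eval σ e = v}

def RewritesTo (e e' : Expr) : Prop := Encl e' ⊆ Encl e

def Interchangeable (e e' : Expr) : Prop := Encl e = Encl e'

def OneWayOnly (e e' : Expr) : Prop := RewritesTo e e' ∧ ¬ RewritesTo e' e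

theorem token_identity_changes_enclosure
    (t t₁ t₂ : Token) (hne : t₁ ≠ t₂) (lo hi : ℚ) (hle : lo ≤ hi) (d : Dim) :
    Encl (.Sub (.Meas t lo hi d) (.Meas t lo hi d)) = {0} ∧
    (hi - lo) ∈ Encl (.Sub (.Meas t₁ lo hi d) (.Meas t₂ lo hi d)) ∧
    (lo < hi → Encl (.Sub (.Meas t₁ lo hi d) (.Meas t₂ lo hi d)) ≠ {0}) := by
  have hmem : (hi - lo) ∈ Encl (.Sub (.Meas t₁ lo hi d) (.Meas t₂ lo hi d)) := by
    refine ⟨fun n => if n = t₁ then hi else lo, ⟨?_, ?_⟩, ?_⟩ <;>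
      simp [TokenConsistent, eval, hne, Ne.symm hne, hle]
  refine ⟨?_, hmem, ?_⟩
  · ext v
    simp only [Encl, Set.mem_setOf_eq, Set.mem_singleton_iff]
    constructor
    · rintro ⟨σ, _, h⟩
      simp [eval] at h; linarith
    · rintro rfl
      exact ⟨fun _ => lo, ⟨⟨le_refl _, hle⟩, ⟨le_refl _, hle⟩⟩, by simp [eval]⟩
  · intro hlt h
    rw [h] at hmem
    simp at hmem
    linarith
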